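/- Let 0 < p ≤ 2 and a ∈ (0,1). For α > 0 define h(λ) = α p (ln λ)² − λ(2 − p − ln λ) for λ ∈ (0,a]. Then there exist constants c₁, c₂ > 0 (depending only on p and a) and ᾱ ∈ (0,1) such that for every α ∈ (0,ᾱ]: (i) there exists at least one λ ∈ (0,a] with h(λ) = 0, and (ii) every λ ∈ (0,a] with h(λ) = 0 satisfies c₁ · α·|ln α| ≤ λ ≤ c₂ · α·|ln α|. -/

import Mathlib

open Real Set Filter Topology


/-- For parameters `p > 0` and `α > 0`, the function
`h(λ) = α p (log λ)² − λ(2 − p + |log λ|)`; for `λ ∈ (0,1)` we have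
`|log λ| = −log λ`, so `h(λ) = α p (log λ)² − λ(2 − p − log λ)`. -/
noncomputable def hFun (p α lam : ℝ) : ℝ :=
  α * p * (Real.log lam) ^ 2 - lam * (2 - p - Real.log lam)


lemma root_bounds (p a α lam : ℝ) (hp0 : 0 < p) (hp2 : p ≤ 2) (ha0 : 0 < a) (ha1 : a < 1)
    (hα : 0 < α) (hlam0 : 0 < lam) (hlama : lam ≤ a) (hroot : hFun p α lam = 0) :
    (p * (-Real.log a) / (2 + (-Real.log a))) * (α * (-Real.log lam)) ≤ lam ∧
      lam ≤ p * (α * (-Real.log lam)) := by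
  set l := Real.log lam with hl
  set L₀ := -Real.log a with hL₀def
  have hloga : Real.log a < 0 := Real.log_neg ha0 ha1
  have hL₀ : 0 < L₀ := by simp only [hL₀def]; linarith
  have hle : l ≤ Real.log a := Real.log_le_log hlam0 hlama
  have hLge : L₀ ≤ -l := by linarith
  have heq : α * p * l ^ 2 = lam * (2 - p - l) := by
    have := hroot
    unfold hFun at this
    linarith
  have hlpos : 0 < -l := lt_of_lt_of_le hL₀ hLge
  constructor
  · rw [div_mul_eq_mul_div, div_le_iff₀ (by linarith : (0:ℝ) < 2 + L₀)]
    have key1 : α * p * l ^ 2 ≤ lam * (2 + (-l)) := by nlinarith [mul_pos hlam0 hp0]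
    have key2 : L₀ * (2 + (-l)) ≤ (-l) * (2 + L₀) := by nlinarith
    have h3 : α * p * (-l) * (L₀ * (2 + (-l))) ≤ α * p * (-l) * ((-l) * (2 + L₀)) := by
      have : (0:ℝ) ≤ α * p * (-l) := by positivity
      exact mul_le_mul_of_nonneg_left key2 this
    have h4 : (p * L₀ * (α * (-l))) * (2 + (-l)) ≤ (lam * (2 + L₀)) * (2 + (-l)) := by
      nlinarith [key1, h3]
    exact le_of_mul_le_mul_right h4 (by linarith)
  · have h5 : lam * (-l) ≤ (p * (α * (-l))) * (-l) := by nlinarith [mul_pos hlam0 hp0]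
    exact le_of_mul_le_mul_right h5 hlpos

lemma exists_root (p a α : ℝ) (hp0 : 0 < p) (ha0 : 0 < a) (ha1 : a < 1)
    (hα : 0 < α) (hha : hFun p α a < 0) :
    ∃ lam ∈ Set.Ioc (0:ℝ) a, hFun p α lam = 0 := by
  have hloga : Real.log a < 0 := Real.log_neg ha0 ha1
  set C := α * p * (Real.log a) ^ 2 with hC
  have hCpos : 0 < C := by
    have : Real.log a ≠ 0 := ne_of_lt hloga
    positivity
  have hsmall : Tendsto (fun lam : ℝ => lam * (2 - p - Real.log lam)) (𝓝[>] 0) (𝓝 0) := by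
    have h1 : Tendsto (fun lam : ℝ => Real.log lam * lam) (𝓝[>] 0) (𝓝 0) := by
      have := tendsto_log_mul_rpow_nhdsGT_zero (r := 1) one_pos
      simpa using this
    have h2 : Tendsto (fun lam : ℝ => lam * (2 - p)) (𝓝[>] 0) (𝓝 0) := by
      have : Tendsto (fun lam : ℝ => lam * (2 - p)) (𝓝 0) (𝓝 (0 * (2 - p))) :=
        (continuous_id.mul continuous_const).tendsto 0
      simpa using this.mono_left nhdsWithin_le_nhds
    have h3 := h2.sub h1
    rw [sub_zero] at h3
    exact h3.congr (fun x => by ring)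
  have hev1 : ∀ᶠ lam in 𝓝[>] (0:ℝ), lam * (2 - p - Real.log lam) < C :=
    hsmall.eventually_lt_const hCpos
  have hev2 : ∀ᶠ lam in 𝓝[>] (0:ℝ), lam ∈ Set.Ioo (0:ℝ) a :=
    Ioo_mem_nhdsGT_of_mem ⟨le_refl 0, ha0⟩
  obtain ⟨lam₀, hlt, hmem⟩ := (hev1.and hev2).exists
  have hl0pos : 0 < lam₀ := hmem.1
  have hl0a : lam₀ < a := hmem.2
  have hpos : 0 < hFun p α lam₀ := by
    have hlogle : Real.log lam₀ ≤ Real.log a := Real.log_le_log hl0pos (le_of_lt hl0a)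
    have hsq : (Real.log a) ^ 2 ≤ (Real.log lam₀) ^ 2 := by nlinarith
    have : C ≤ α * p * (Real.log lam₀) ^ 2 := by
      rw [hC]; nlinarith [mul_pos hα hp0]
    unfold hFun; linarith
  have hcont : ContinuousOn (hFun p α) (Set.Icc lam₀ a) := by
    have hlog : ContinuousOn Real.log (Set.Icc lam₀ a) := by
      apply Real.continuousOn_log.mono
      intro x hx
      simp only [Set.mem_compl_iff, Set.mem_singleton_iff]
      intro h; rw [h] at hx; exact absurd hx.1 (not_le.mpr hl0pos)
    unfold hFun
    exact (continuousOn_const.mul (hlog.pow 2)).sub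
      (continuousOn_id.mul (continuousOn_const.sub hlog))
  have hsub := intermediate_value_Icc' (le_of_lt hl0a) hcont
  have h0mem : (0:ℝ) ∈ Set.Icc (hFun p α a) (hFun p α lam₀) := ⟨le_of_lt hha, le_of_lt hpos⟩
  obtain ⟨lam, hlamIcc, hlam0⟩ := hsub h0mem
  exact ⟨lam, ⟨lt_of_lt_of_le hl0pos hlamIcc.1, hlamIcc.2⟩, hlam0⟩

/-- Let `0 < p ≤ 2` and `a ∈ (0,1)`. Then there exist constants `c₁, c₂ > 0`
(depending only on `p` and `a`) and `ᾱ ∈ (0,1)` such that for every `α ∈ (0,ᾱ]`: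
(i) there exists at least one `λ ∈ (0,a]` with `h(λ) = 0`, and
(ii) every `λ ∈ (0,a]` with `h(λ) = 0` satisfies `c₁·α·|log α| ≤ λ ≤ c₂·α·|log α|`. -/
theorem stmt5 (p a : ℝ) (hp0 : 0 < p) (hp2 : p ≤ 2) (ha0 : 0 < a) (ha1 : a < 1) :
    ∃ c₁ > (0 : ℝ), ∃ c₂ > (0 : ℝ), ∃ αbar ∈ Set.Ioo (0 : ℝ) 1,
      ∀ α ∈ Set.Ioc (0 : ℝ) αbar,
        (∃ lam ∈ Set.Ioc (0 : ℝ) a, hFun p α lam = 0) ∧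
        (∀ lam ∈ Set.Ioc (0 : ℝ) a, hFun p α lam = 0 →
          c₁ * (α * |Real.log α|) ≤ lam ∧ lam ≤ c₂ * (α * |Real.log α|)) := by
  have hloga : Real.log a < 0 := Real.log_neg ha0 ha1
  set L₀ := -Real.log a with hL₀def
  have hL₀ : 0 < L₀ := by simp only [hL₀def]; linarith
  set c := p * L₀ / (2 + L₀) with hcdef
  have hc : 0 < c := div_pos (by positivity) (by linarith)
  set K₁ := -Real.log (c * L₀) with hK₁def
  refine ⟨c / 2, by positivity, 2 * p, by positivity, ?_⟩
  -- T = -log α tends to atTop as α → 0⁺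
  have hT : Tendsto (fun α : ℝ => -Real.log α) (𝓝[>] 0) atTop :=
    tendsto_neg_atBot_atTop.comp Real.tendsto_log_nhdsGT_zero
  -- eventual conditions
  have hE1 : ∀ᶠ α in 𝓝[>] (0:ℝ), hFun p α a < 0 := by
    have hApos : 0 < a * (2 - p + L₀) / (p * (Real.log a) ^ 2) := by
      have hlogne : Real.log a ≠ 0 := ne_of_lt hloga
      apply div_pos
      · apply mul_pos ha0; linarith
      · positivity
    filter_upwards [Ioo_mem_nhdsGT_of_mem
      (show (0:ℝ) ∈ Set.Ico (0:ℝ) (a * (2 - p + L₀) / (p * (Real.log a) ^ 2))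
        from ⟨le_refl 0, hApos⟩)] with α hα
    have h1 : α * (p * (Real.log a) ^ 2) < a * (2 - p + L₀) := by
      have hlogne : Real.log a ≠ 0 := ne_of_lt hloga
      have hden : 0 < p * (Real.log a) ^ 2 := by positivity
      calc α * (p * (Real.log a) ^ 2)
          < (a * (2 - p + L₀) / (p * (Real.log a) ^ 2)) * (p * (Real.log a) ^ 2) := by
            exact mul_lt_mul_of_pos_right hα.2 hden
        _ = a * (2 - p + L₀) := div_mul_cancel₀ _ (ne_of_gt hden)
    unfold hFun
    have : 2 - p - Real.log a = 2 - p + L₀ := by rw [hL₀def]; ring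
    rw [this]
    nlinarith
  have hE2 : ∀ᶠ α in 𝓝[>] (0:ℝ), K₁ ≤ -Real.log α := hT.eventually_ge_atTop K₁
  have hE3 : ∀ᶠ α in 𝓝[>] (0:ℝ), 1 ≤ -Real.log α := hT.eventually_ge_atTop 1
  have hE4 : ∀ᶠ α in 𝓝[>] (0:ℝ),
      Real.log (2 * p) + Real.log (-Real.log α) ≤ (-Real.log α) / 2 := by
    have haux : ∀ᶠ T in atTop, Real.log (2 * p) + Real.log T ≤ T / 2 := by
      have hbound := Real.isLittleO_log_id_atTop.bound (show (0:ℝ) < 1/4 by norm_num)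
      filter_upwards [hbound, eventually_ge_atTop (0:ℝ),
        eventually_ge_atTop (4 * Real.log (2 * p))] with T hb hT0 hT4
      have h1 : Real.log T ≤ T / 4 := by
        have := le_trans (le_abs_self _) hb
        rw [Real.norm_eq_abs, id, abs_of_nonneg hT0] at this
        linarith
      linarith
    exact hT.eventually haux
  have hev := hE1.and (hE2.and (hE3.and hE4))
  obtain ⟨u, hu, hsub⟩ := mem_nhdsGT_iff_exists_Ioo_subset.mp hev
  refine ⟨min (u / 2) (1 / 2), ⟨by
    simp only [lt_min_iff]
    exact ⟨by simpa using half_pos (show (0:ℝ) < u from hu), by norm_num⟩,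
    lt_of_le_of_lt (min_le_right _ _) (by norm_num)⟩, ?_⟩
  intro α hα
  have hα0 : 0 < α := hα.1
  have hαu : α ∈ Set.Ioo (0:ℝ) u := by
    constructor
    · exact hα0
    · have h1 : α ≤ u / 2 := le_trans hα.2 (min_le_left _ _)
      have : (0:ℝ) < u := by simpa using hu
      linarith
  obtain ⟨E1, E2, E3, E4⟩ := hsub hαu
  set T := -Real.log α with hTdef
  have hT1 : 1 ≤ T := E3
  have hTpos : 0 < T := lt_of_lt_of_le one_pos hT1
  have habs : |Real.log α| = T := by
    rw [abs_of_neg (by linarith : Real.log α < 0)]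
  constructor
  · exact exists_root p a α hp0 ha0 ha1 hα0 E1
  · intro lam hlam hroot
    obtain ⟨hlow, hup⟩ := root_bounds p a α lam hp0 hp2 ha0 ha1 hα0 hlam.1 hlam.2 hroot
    rw [← hL₀def, ← hcdef] at hlow
    set L := -Real.log lam with hLdef
    have hlampos : 0 < lam := hlam.1
    have hLL₀ : L₀ ≤ L := by
      have := Real.log_le_log hlampos hlam.2
      simp only [hLdef, hL₀def]; linarith
    have hLpos : 0 < L := lt_of_lt_of_le hL₀ hLL₀
    -- step 1 : c * L₀ * α ≤ lam
    have hstep1 : c * L₀ * α ≤ lam := by nlinarith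
    -- step 2 : L ≤ K₁ + T
    have hcL₀pos : 0 < c * L₀ := by positivity
    have hstep2 : L ≤ K₁ + T := by
      have hpos : 0 < c * L₀ * α := by positivity
      have := Real.log_le_log hpos hstep1
      rw [Real.log_mul (ne_of_gt hcL₀pos) (ne_of_gt hα0)] at this
      simp only [hLdef, hK₁def, hTdef]
      linarith
    have hstep3 : L ≤ 2 * T := by linarith
    -- upper bound
    have hupper : lam ≤ 2 * p * (α * T) := by nlinarith
    -- step 5 : T / 2 ≤ L
    have hstep5 : T / 2 ≤ L := by
      have h2pαT : 0 < 2 * p * (α * T) := by positivity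
      have hlog := Real.log_le_log hlampos hupper
      rw [Real.log_mul (by positivity) (by positivity),
        Real.log_mul (ne_of_gt hα0) (ne_of_gt hTpos)] at hlog
      have hlogT : Real.log (2 * p) + Real.log T ≤ T / 2 := E4
      simp only [hLdef, hTdef] at *
      linarith
    -- lower bound
    have hlower : c / 2 * (α * T) ≤ lam := by nlinarith
    rw [habs]
    exact ⟨hlower, hupper⟩
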